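/- Let R be a commutative ring, let P be an ℕ-indexed chain complex of R-modules all of whose terms are flat, and let 0 → A → B → C → 0 be a sequence of chain maps of ℕ-indexed chain complexes of R-modules that is short exact in every degree. Then for every n ≥ 0 the induced sequence 0 → (P ⊗_Δ A)_n → (P ⊗_Δ B)_n → (P ⊗_Δ C)_n → 0 of R-modules is short exact. -/

import Mathlib

open CategoryTheory CategoryTheory.Limits CategoryTheory.MonoidalCategory AlgebraicTopology

noncomputable section

universe u

variable (R : Type u) [CommRing R]

/-- The diagonal of the degreewise tensor product of two simplicial `R`-modules. -/
def diagTensor (A B : SimplicialObject (ModuleCat.{u} R)) :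
    SimplicialObject (ModuleCat.{u} R) where
  obj n := A.obj n ⊗ B.obj n
  map f := A.map f ⊗ₘ B.map f
  map_id n := by
    show A.map (𝟙 n) ⊗ₘ B.map (𝟙 n) = 𝟙 _
    rw [CategoryTheory.Functor.map_id, CategoryTheory.Functor.map_id, id_tensorHom_id]
  map_comp f g := by
    show A.map (f ≫ g) ⊗ₘ B.map (f ≫ g) = (A.map f ⊗ₘ B.map f) ≫ (A.map g ⊗ₘ B.map g)
    rw [Functor.map_comp, Functor.map_comp, tensorHom_comp_tensorHom]

/-- The simplicial tensor product `P ⊗_Δ Q := N (diag (Γ P ⊗ Γ Q))` of two `ℕ`-indexed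
chain complexes of `R`-modules, where `Γ` is the Dold–Kan functor and `N` is the
normalized Moore complex functor. -/
def sTensor (P Q : ChainComplex (ModuleCat.{u} R) ℕ) : ChainComplex (ModuleCat.{u} R) ℕ :=
  (normalizedMooreComplex (ModuleCat.{u} R)).obj
    (diagTensor R (CategoryTheory.Abelian.DoldKan.Γ.obj P)
      (CategoryTheory.Abelian.DoldKan.Γ.obj Q))

/-- The map of simplicial `R`-modules induced on diagonal tensor products by a map in the
second variable. -/
def diagTensorMap (A : SimplicialObject (ModuleCat.{u} R))
    {B B' : SimplicialObject (ModuleCat.{u} R)} (h : B ⟶ B') :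
    diagTensor R A B ⟶ diagTensor R A B' where
  app n := A.obj n ◁ h.app n
  naturality {n n'} f := by
    show (A.map f ⊗ₘ B.map f) ≫ (A.obj n' ◁ h.app n') =
      (A.obj n ◁ h.app n) ≫ (A.map f ⊗ₘ B'.map f)
    simp only [← MonoidalCategory.id_tensorHom, MonoidalCategory.tensorHom_comp_tensorHom,
      Category.id_comp, Category.comp_id, NatTrans.naturality]

/-- The chain map `P ⊗_Δ B ⟶ P ⊗_Δ B'` induced by a chain map `B ⟶ B'`. -/
def sTensorMap (P : ChainComplex (ModuleCat.{u} R) ℕ)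
    {B B' : ChainComplex (ModuleCat.{u} R) ℕ} (h : B ⟶ B') :
    sTensor R P B ⟶ sTensor R P B' :=
  (normalizedMooreComplex (ModuleCat.{u} R)).map
    (diagTensorMap R (CategoryTheory.Abelian.DoldKan.Γ.obj P)
      (CategoryTheory.Abelian.DoldKan.Γ.map h))


section Aux

/-- Retracts of short exact sequences of modules are short exact (element-level form). -/
lemma retract_exact_aux {A B C NA NB NC : ModuleCat.{u} R}
    (iA : NA ⟶ A) (iB : NB ⟶ B) (iC : NC ⟶ C)
    (pA : A ⟶ NA) (pB : B ⟶ NB) (pC : C ⟶ NC)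
    (F : A ⟶ B) (G : B ⟶ C) (NF : NA ⟶ NB) (NG : NB ⟶ NC)
    (hiA : iA ≫ pA = 𝟙 NA) (hiB : iB ≫ pB = 𝟙 NB) (hiC : iC ≫ pC = 𝟙 NC)
    (hFnat : NF ≫ iB = iA ≫ F) (hGnat : NG ≫ iC = iB ≫ G)
    (hpF : F ≫ pB = pA ≫ NF) (hpG : G ≫ pC = pB ≫ NG)
    (hinj : Function.Injective F) (hsurj : Function.Surjective G)
    (hex : LinearMap.range F.hom = LinearMap.ker G.hom) :
    Function.Injective NF ∧ Function.Surjective NG ∧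
      LinearMap.range NF.hom = LinearMap.ker NG.hom := by
  have hiA' : ∀ x, pA (iA x) = x := fun x => by
    simpa using ConcreteCategory.congr_hom hiA x
  have hiB' : ∀ x, pB (iB x) = x := fun x => by
    simpa using ConcreteCategory.congr_hom hiB x
  have hiC' : ∀ x, pC (iC x) = x := fun x => by
    simpa using ConcreteCategory.congr_hom hiC x
  have hiAinj : Function.Injective iA := fun x y h => by rw [← hiA' x, ← hiA' y, h]
  have hiCinj : Function.Injective iC := fun x y h => by rw [← hiC' x, ← hiC' y, h]
  have hFnat' : ∀ x, iB (NF x) = F (iA x) := fun x => by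
    simpa using ConcreteCategory.congr_hom hFnat x
  have hGnat' : ∀ x, iC (NG x) = G (iB x) := fun x => by
    simpa using ConcreteCategory.congr_hom hGnat x
  have hpF' : ∀ x, pB (F x) = NF (pA x) := fun x => by
    simpa using ConcreteCategory.congr_hom hpF x
  have hpG' : ∀ x, pC (G x) = NG (pB x) := fun x => by
    simpa using ConcreteCategory.congr_hom hpG x
  have hGF : ∀ x, G (F x) = 0 := fun x => by
    have : F x ∈ LinearMap.ker G.hom := hex ▸ LinearMap.mem_range_self _ x
    exact this
  refine ⟨?_, ?_, ?_⟩
  · intro x y h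
    apply hiAinj; apply hinj
    rw [← hFnat', ← hFnat', h]
  · intro c
    obtain ⟨b, hb⟩ := hsurj (iC c)
    refine ⟨pB b, ?_⟩
    have h1 : pC (G b) = NG (pB b) := hpG' b
    rw [hb, hiC' c] at h1
    exact h1.symm
  · apply le_antisymm
    · rintro _ ⟨a, rfl⟩
      have h0 : iC (NG (NF a)) = iC 0 := by
        rw [hGnat', hFnat', hGF]; simp
      exact LinearMap.mem_ker.2 (hiCinj h0)
    · intro x hx
      have hx0 : NG x = 0 := hx
      have hG0 : G (iB x) = 0 := by rw [← hGnat', hx0, map_zero]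
      have : iB x ∈ LinearMap.range F.hom := by rw [hex]; exact hG0
      obtain ⟨a, ha⟩ := this
      refine ⟨pA a, ?_⟩
      rw [← hpF', ha, hiB']

/-- Each term of `Γ P` is flat when each term of `P` is flat. -/
lemma flat_gamma_aux (P : ChainComplex (ModuleCat.{u} R) ℕ)
    (hflat : ∀ i, Module.Flat R (P.X i)) (Δ : SimplexCategoryᵒᵖ) :
    Module.Flat R ((CategoryTheory.Abelian.DoldKan.Γ.obj P).obj Δ) := by
  classical
  haveI : ∀ A : SimplicialObject.Splitting.IndexSet Δ,
      Module.Flat R (P.X A.1.unop.len) := fun A => hflat _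
  haveI : Module.Flat R (DirectSum (SimplicialObject.Splitting.IndexSet Δ)
    (fun A => P.X A.1.unop.len)) := inferInstance
  have e := ModuleCat.coprodIsoDirectSum (R := R)
    (fun A : SimplicialObject.Splitting.IndexSet Δ => P.X A.1.unop.len)
  haveI : Module.Flat R ((ModuleCat.of R (DirectSum (SimplicialObject.Splitting.IndexSet Δ)
      (fun A => P.X A.1.unop.len))) : ModuleCat.{u} R) :=
    inferInstanceAs (Module.Flat R (DirectSum (SimplicialObject.Splitting.IndexSet Δ)
      (fun A => P.X A.1.unop.len)))
  exact Module.Flat.of_linearEquiv e.toLinearEquiv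

/-- `Γ` preserves degreewise short exact sequences. -/
lemma gamma_degreewise_exact_aux (A B C : ChainComplex (ModuleCat.{u} R) ℕ)
    (f : A ⟶ B) (g : B ⟶ C)
    (hinj : ∀ n, Function.Injective (f.f n))
    (hsurj : ∀ n, Function.Surjective (g.f n))
    (hexact : ∀ n, LinearMap.range (f.f n).hom = LinearMap.ker (g.f n).hom) (Δ : SimplexCategoryᵒᵖ) :
    Function.Injective ((CategoryTheory.Abelian.DoldKan.Γ.map f).app Δ) ∧
    Function.Surjective ((CategoryTheory.Abelian.DoldKan.Γ.map g).app Δ) ∧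
    LinearMap.range ((CategoryTheory.Abelian.DoldKan.Γ.map f).app Δ).hom
      = LinearMap.ker ((CategoryTheory.Abelian.DoldKan.Γ.map g).app Δ).hom := by
  have hfg : f ≫ g = 0 := by
    ext n x
    have : f.f n x ∈ LinearMap.ker (g.f n).hom := (hexact n) ▸ LinearMap.mem_range_self _ x
    simpa using this
  letI : Abelian (SimplicialObject (ModuleCat.{u} R)) :=
    inferInstanceAs (Abelian (SimplexCategoryᵒᵖ ⥤ ModuleCat.{u} R))
  let S : ShortComplex (ChainComplex (ModuleCat.{u} R) ℕ) := ShortComplex.mk f g hfg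
  have hS : S.ShortExact := by
    rw [HomologicalComplex.shortExact_iff_degreewise_shortExact]
    intro i
    exact
      { exact := ShortComplex.Exact.moduleCat_of_range_eq_ker _ _ (hexact i)
        mono_f := (ModuleCat.mono_iff_injective _).2 (hinj i)
        epi_g := (ModuleCat.epi_iff_surjective _).2 (hsurj i) }
  haveI : (CategoryTheory.Abelian.DoldKan.Γ (A := ModuleCat.{u} R)).IsEquivalence :=
    (CategoryTheory.Abelian.DoldKan.equivalence (A := ModuleCat.{u} R)).isEquivalence_inverse
  have hS2 : (S.map (CategoryTheory.Abelian.DoldKan.Γ)).ShortExact := hS.map_of_exact _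
  have hS2' : (ShortComplex.mk (C := SimplexCategoryᵒᵖ ⥤ ModuleCat.{u} R)
      (CategoryTheory.Abelian.DoldKan.Γ.map f) (CategoryTheory.Abelian.DoldKan.Γ.map g)
      (by rw [← Functor.map_comp, hfg, Functor.map_zero])).ShortExact := hS2
  have hS3 := hS2'.map_of_exact ((evaluation SimplexCategoryᵒᵖ (ModuleCat.{u} R)).obj Δ)
  exact ⟨hS3.moduleCat_injective_f, hS3.moduleCat_surjective_g,
    hS3.exact.moduleCat_range_eq_ker⟩

end Aux

/-- If all terms of `P` are flat `R`-modules and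
`0 → A → B → C → 0` is a degreewise short exact sequence of chain complexes of
`R`-modules, then `0 → (P ⊗_Δ A)_n → (P ⊗_Δ B)_n → (P ⊗_Δ C)_n → 0` is a short exact
sequence of `R`-modules for every `n`. -/
theorem sTensor_exact (P A B C : ChainComplex (ModuleCat.{u} R) ℕ)
    (hflat : ∀ i, Module.Flat R (P.X i))
    (f : A ⟶ B) (g : B ⟶ C)
    (hinj : ∀ n, Function.Injective (f.f n))
    (hsurj : ∀ n, Function.Surjective (g.f n))
    (hexact : ∀ n, LinearMap.range (f.f n).hom = LinearMap.ker (g.f n).hom) :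
    ∀ n, Function.Injective ((sTensorMap R P f).f n) ∧
      Function.Surjective ((sTensorMap R P g).f n) ∧
      LinearMap.range ((sTensorMap R P f).f n).hom = LinearMap.ker ((sTensorMap R P g).f n).hom := by
  intro n
  set Δ := Opposite.op (SimplexCategory.mk n) with hΔ
  obtain ⟨injΓ, surjΓ, exΓ⟩ :=
    gamma_degreewise_exact_aux R A B C f g hinj hsurj hexact Δ
  haveI : Module.Flat R ((CategoryTheory.Abelian.DoldKan.Γ.obj P).obj Δ) :=
    flat_gamma_aux R P hflat Δ
  set M : ModuleCat.{u} R := (CategoryTheory.Abelian.DoldKan.Γ.obj P).obj Δ with hM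
  -- the tensored maps at level Δ
  have hinjT : Function.Injective
      (LinearMap.lTensor M ((CategoryTheory.Abelian.DoldKan.Γ.map f).app Δ).hom) :=
    Module.Flat.lTensor_preserves_injective_linearMap _ injΓ
  have hsurjT : Function.Surjective
      (LinearMap.lTensor M ((CategoryTheory.Abelian.DoldKan.Γ.map g).app Δ).hom) :=
    LinearMap.lTensor_surjective M surjΓ
  have hexT0 : Function.Exact
      (LinearMap.lTensor M ((CategoryTheory.Abelian.DoldKan.Γ.map f).app Δ).hom)
      (LinearMap.lTensor M ((CategoryTheory.Abelian.DoldKan.Γ.map g).app Δ).hom) :=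
    lTensor_exact M (LinearMap.exact_iff.mpr exΓ.symm) surjΓ
  have hexT : LinearMap.range
        (LinearMap.lTensor M ((CategoryTheory.Abelian.DoldKan.Γ.map f).app Δ).hom)
      = LinearMap.ker
        (LinearMap.lTensor M ((CategoryTheory.Abelian.DoldKan.Γ.map g).app Δ).hom) :=
    (LinearMap.exact_iff.mp hexT0).symm
  -- the three simplicial modules
  set ΓP := CategoryTheory.Abelian.DoldKan.Γ.obj P
  set XA := diagTensor R ΓP (CategoryTheory.Abelian.DoldKan.Γ.obj A)
  set XB := diagTensor R ΓP (CategoryTheory.Abelian.DoldKan.Γ.obj B)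
  set XC := diagTensor R ΓP (CategoryTheory.Abelian.DoldKan.Γ.obj C)
  set φ : XA ⟶ XB := diagTensorMap R ΓP (CategoryTheory.Abelian.DoldKan.Γ.map f)
  set ψ : XB ⟶ XC := diagTensorMap R ΓP (CategoryTheory.Abelian.DoldKan.Γ.map g)
  -- split mono data for the normalized Moore complex, in degree n
  have hiA := HomologicalComplex.congr_hom
    (DoldKan.splitMonoInclusionOfMooreComplexMap XA).id n
  have hiB := HomologicalComplex.congr_hom
    (DoldKan.splitMonoInclusionOfMooreComplexMap XB).id n
  have hiC := HomologicalComplex.congr_hom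
    (DoldKan.splitMonoInclusionOfMooreComplexMap XC).id n
  simp only [HomologicalComplex.comp_f, HomologicalComplex.id_f] at hiA hiB hiC
  have hFnat : (NormalizedMooreComplex.map φ).f n ≫ (inclusionOfMooreComplexMap XB).f n
      = (inclusionOfMooreComplexMap XA).f n ≫ φ.app Δ := by
    simp [inclusionOfMooreComplexMap_f, NormalizedMooreComplex.map_f]
    exact Subobject.factorThru_arrow _ _ _
  have hGnat : (NormalizedMooreComplex.map ψ).f n ≫ (inclusionOfMooreComplexMap XC).f n
      = (inclusionOfMooreComplexMap XB).f n ≫ ψ.app Δ := by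
    simp [inclusionOfMooreComplexMap_f, NormalizedMooreComplex.map_f]
    exact Subobject.factorThru_arrow _ _ _
  have hpF := HomologicalComplex.congr_hom
    (DoldKan.PInftyToNormalizedMooreComplex_naturality φ) n
  have hpG := HomologicalComplex.congr_hom
    (DoldKan.PInftyToNormalizedMooreComplex_naturality ψ) n
  simp only [HomologicalComplex.comp_f, AlternatingFaceMapComplex.map_f] at hpF hpG
  have key := retract_exact_aux R
    ((inclusionOfMooreComplexMap XA).f n) ((inclusionOfMooreComplexMap XB).f n)
    ((inclusionOfMooreComplexMap XC).f n)
    ((DoldKan.PInftyToNormalizedMooreComplex XA).f n)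
    ((DoldKan.PInftyToNormalizedMooreComplex XB).f n)
    ((DoldKan.PInftyToNormalizedMooreComplex XC).f n)
    (φ.app Δ) (ψ.app Δ)
    ((NormalizedMooreComplex.map φ).f n) ((NormalizedMooreComplex.map ψ).f n)
    hiA hiB hiC hFnat hGnat hpF hpG hinjT hsurjT hexT
  exact key


end
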